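/- Let T be a 1.5D terrain given by a continuous function f : ℝ → ℝ, and let p_i, p_j be points on T with y(p_i) < y(p_j). Then among all points q on T with x(q) > x(p_i) that lie on the perpendicular bisector of p_i and p_j and are visible from both p_i and p_j, only the one with smallest x-coordinate can exist; i.e., if q₁ and q₂ are two such points with x(q₁) < x(q₂), a contradiction follows. Formally: there do not exist q₁, q₂ on T with x(p_i) < x(q₁) < x(q₂), both on the bisector of p_i and p_j, with q₂ visible from p_i. -/

import Mathlib

/-- Euclidean distance between two points of `ℝ × ℝ`. -/
noncomputable def edist2 (p q : ℝ × ℝ) : ℝ :=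
  Real.sqrt ((p.1 - q.1) ^ 2 + (p.2 - q.2) ^ 2)

/-- `p` sees `q` over the terrain given by `f`: every point of the segment
`[p, q]` lies weakly above the graph of `f`. -/
def sees (f : ℝ → ℝ) (p q : ℝ × ℝ) : Prop :=
  ∀ t : ℝ, t ∈ Set.Icc (0 : ℝ) 1 →
    (1 - t) * p.2 + t * q.2 ≥ f ((1 - t) * p.1 + t * q.1)

/-- To the right of `p_i`, only the leftmost bisector-terrain intersection can
be visible from `p_i`. -/
theorem no_second_bisector_event (f : ℝ → ℝ) (hf : Continuous f)
    (xi xj : ℝ) (hy : f xi < f xj) :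
    ¬ ∃ x₁ x₂ : ℝ, xi < x₁ ∧ x₁ < x₂ ∧
      edist2 (x₁, f x₁) (xi, f xi) = edist2 (x₁, f x₁) (xj, f xj) ∧
      edist2 (x₂, f x₂) (xi, f xi) = edist2 (x₂, f x₂) (xj, f xj) ∧
      sees f (xi, f xi) (x₂, f x₂) := by
  rintro ⟨x₁, x₂, h1, h2, e1, e2, hsee⟩
  simp only [edist2] at e1 e2
  have A1 : (x₁ - xi) ^ 2 + (f x₁ - f xi) ^ 2
      = (x₁ - xj) ^ 2 + (f x₁ - f xj) ^ 2 := by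
    have := congrArg (· ^ 2) e1
    simpa [Real.sq_sqrt, add_nonneg, sq_nonneg] using this
  have A2 : (x₂ - xi) ^ 2 + (f x₂ - f xi) ^ 2
      = (x₂ - xj) ^ 2 + (f x₂ - f xj) ^ 2 := by
    have := congrArg (· ^ 2) e2
    simpa [Real.sq_sqrt, add_nonneg, sq_nonneg] using this
  have hd : (0:ℝ) < x₂ - xi := by linarith
  set t : ℝ := (x₁ - xi) / (x₂ - xi) with ht
  have ht0 : 0 ≤ t := div_nonneg (by linarith) hd.le
  have ht1 : t ≤ 1 := by
    rw [ht, div_le_one hd]; linarith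
  have hineq := hsee t ⟨ht0, ht1⟩
  have harg : (1 - t) * xi + t * x₂ = x₁ := by
    rw [ht]; field_simp; ring
  rw [harg] at hineq
  -- multiply through by x₂ - xi
  have hmul := mul_le_mul_of_nonneg_left hineq hd.le
  have hexp : (x₂ - xi) * ((1 - t) * f xi + t * f x₂)
      = (x₂ - x₁) * f xi + (x₁ - xi) * f x₂ := by
    rw [ht]; field_simp; ring
  rw [hexp] at hmul
  have key : -((x₂ - x₁) * ((xi - xj) ^ 2 + (f xi - f xj) ^ 2))
      = 2 * (f xj - f xi) *
        ((x₂ - x₁) * f xi + (x₁ - xi) * f x₂ - (x₂ - xi) * f x₁) := by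
    linear_combination (x₂ - xi) * A1 - (x₁ - xi) * A2
  have hK : 0 < (xi - xj) ^ 2 + (f xi - f xj) ^ 2 := by nlinarith [sq_nonneg (xi - xj)]
  have hL : -((x₂ - x₁) * ((xi - xj) ^ 2 + (f xi - f xj) ^ 2)) < 0 := by
    have := mul_pos (sub_pos.mpr h2) hK; linarith
  have hR : 0 ≤ 2 * (f xj - f xi) *
      ((x₂ - x₁) * f xi + (x₁ - xi) * f x₂ - (x₂ - xi) * f x₁) :=
    mul_nonneg (by linarith) (by linarith)
  linarith [key, hL, hR]
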